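/- Let k be a field, m,n positive integers, N an invertible n×n matrix over k, and M = 0_m ⊕ N. Then the semisimple quotient o(M)/rad(o(M)) is isomorphic as a Lie algebra to the direct product (gl_m(k)/rad(gl_m(k))) × (o(N)/rad(o(N))). -/

import Mathlib

open Matrix LieAlgebra

attribute [local instance 100] LieRing.ofAssociativeRing

/-- The Lie algebra `o(M) = {X ∈ gl | Xᵀ * M + M * X = 0}` of matrices preserving the
bilinear form with Gram matrix `M`. -/
def lieO (k : Type) [Field k] {ι : Type} [Fintype ι] [DecidableEq ι]
    (M : Matrix ι ι k) : LieSubalgebra k (Matrix ι ι k) where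
  carrier := {X | Xᵀ * M + M * X = 0}
  zero_mem' := by simp
  add_mem' := by
    intro X Y hX hY
    simp only [Set.mem_setOf_eq] at *
    rw [Matrix.transpose_add, Matrix.add_mul, Matrix.mul_add, add_add_add_comm, hX, hY, add_zero]
  smul_mem' := by
    intro c X hX
    simp only [Set.mem_setOf_eq] at *
    rw [Matrix.transpose_smul, Matrix.smul_mul, Matrix.mul_smul, ← smul_add, hX, smul_zero]
  lie_mem' := by
    intro X Y hX hY
    simp only [Set.mem_setOf_eq] at *
    have hX' : Xᵀ * M = -(M * X) := eq_neg_of_add_eq_zero_left hX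
    have hY' : Yᵀ * M = -(M * Y) := eq_neg_of_add_eq_zero_left hY
    have h1 : Yᵀ * Xᵀ * M = M * Y * X := by
      rw [mul_assoc, hX', mul_neg, ← mul_assoc, hY', neg_mul, neg_neg]
    have h2 : Xᵀ * Yᵀ * M = M * X * Y := by
      rw [mul_assoc, hY', mul_neg, ← mul_assoc, hX', neg_mul, neg_neg]
    simp only [Ring.lie_def, Matrix.transpose_sub, Matrix.transpose_mul, Matrix.sub_mul,
      Matrix.mul_sub]
    rw [h1, h2, ← mul_assoc M X Y, ← mul_assoc M Y X]
    abel

instance prodBracket {L M : Type} [LieRing L] [LieRing M] : Bracket (L × M) (L × M) :=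
  ⟨fun x y => (⁅x.1, y.1⁆, ⁅x.2, y.2⁆)⟩

@[simp] lemma prod_bracket_fst {L M : Type} [LieRing L] [LieRing M] (x y : L × M) :
    ⁅x, y⁆.1 = ⁅x.1, y.1⁆ := rfl

@[simp] lemma prod_bracket_snd {L M : Type} [LieRing L] [LieRing M] (x y : L × M) :
    ⁅x, y⁆.2 = ⁅x.2, y.2⁆ := rfl

/-- The product of two Lie rings, with componentwise bracket. -/
instance prodLieRing {L M : Type} [LieRing L] [LieRing M] : LieRing (L × M) where
  add_lie x y z := by ext <;> simp
  lie_add x y z := by ext <;> simp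
  lie_self x := by ext <;> simp
  leibniz_lie x y z := by ext <;> simp

/-- The product of two Lie algebras. -/
instance prodLieAlgebra (k : Type) {L M : Type} [CommRing k] [LieRing L] [LieRing M]
    [LieAlgebra k L] [LieAlgebra k M] : LieAlgebra k (L × M) where
  lie_smul c x y := by ext <;> simp


section General

variable {R : Type*} {L L' : Type*} [CommRing R] [LieRing L] [LieAlgebra R L]
  [LieRing L'] [LieAlgebra R L']

/-- An extension of a solvable Lie algebra by a solvable ideal is solvable. -/
theorem my_isSolvable_of_ideal_quotient (I : LieIdeal R L) [hI : IsSolvable I]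
    [hQ : IsSolvable (L ⧸ I)] : IsSolvable L := by
  obtain ⟨k, hk⟩ := IsSolvable.solvable R (L ⧸ I)
  obtain ⟨l, hl⟩ := IsSolvable.solvable R I
  -- quotient map as a Lie hom
  let π : L →ₗ⁅R⁆ L ⧸ I :=
    { I.toSubmodule.mkQ with map_lie' := rfl }
  have hπ : Function.Surjective π := Submodule.mkQ_surjective _
  have hker : π.ker = I := by
    ext x
    rw [LieHom.mem_ker]
    exact LieSubmodule.Quotient.mk_eq_zero I
  have h1 : derivedSeries R L k ≤ I := by
    rw [← hker, ← LieIdeal.map_eq_bot_iff, LieIdeal.derivedSeries_map_eq k hπ, hk]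
  refine IsSolvable.mk (R := R) (k := l + k) ?_
  rw [derivedSeries_def, derivedSeriesOfIdeal_add, ← derivedSeries_def, ← le_bot_iff]
  calc derivedSeriesOfIdeal R L l (derivedSeries R L k)
      ≤ derivedSeriesOfIdeal R L l I := derivedSeriesOfIdeal_mono h1 l
    _ = ⊥ := (LieIdeal.derivedSeries_eq_bot_iff I l).mp hl

/-- If `f : L → L'` has solvable kernel and `L'` is solvable, then `L` is solvable. -/
theorem my_isSolvable_of_ker (f : L →ₗ⁅R⁆ L') (h1 : IsSolvable f.ker)
    (h2 : IsSolvable L') : IsSolvable L := by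
  haveI := h1; haveI := h2
  haveI : IsSolvable f.range := by
    have hinj : Function.Injective f.range.incl := Subtype.coe_injective
    exact hinj.lieAlgebra_isSolvable
  haveI : IsSolvable (L ⧸ f.ker) :=
    (solvable_iff_equiv_solvable f.quotKerEquivRange).mpr inferInstance
  exact my_isSolvable_of_ideal_quotient f.ker

end General

section General2

variable {R : Type*} {L L' : Type*} [CommRing R] [LieRing L] [LieAlgebra R L]
  [LieRing L'] [LieAlgebra R L']

/-- The preimage of a solvable ideal under a hom with solvable kernel is solvable. -/
theorem my_isSolvable_comap (f : L →ₗ⁅R⁆ L') (I' : LieIdeal R L') (hI' : IsSolvable I')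
    (hker : IsSolvable f.ker) : IsSolvable (LieIdeal.comap f I') := by
  set K := LieIdeal.comap f I' with hK
  -- restriction of f to K, valued in I'
  let g : K →ₗ⁅R⁆ I' :=
    { toFun := fun x => ⟨f x.val, LieIdeal.mem_comap.mp x.prop⟩
      map_add' := by intro x y; ext; simp
      map_smul' := by intro c x; ext; simp
      map_lie' := by intro x y; ext; simp }
  have hgker : IsSolvable g.ker := by
    let h : (g.ker : Type _) →ₗ⁅R⁆ f.ker :=
      { toFun := fun x => ⟨x.val.val, by
          have := x.prop
          rw [LieHom.mem_ker] at this
          have : f x.val.val = 0 := congrArg Subtype.val this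
          exact LieHom.mem_ker.mpr this⟩
        map_add' := by intro x y; ext; simp
        map_smul' := by intro c x; ext; simp
        map_lie' := by intro x y; ext; simp }
    have hinj : Function.Injective h := by
      intro x y hxy
      have h2 := congrArg Subtype.val hxy
      ext
      exact h2
    haveI := hker
    exact hinj.lieAlgebra_isSolvable
  exact my_isSolvable_of_ker g hgker hI'

/-- Surjective image commutes with the derived series of an ideal. -/
theorem my_derivedSeriesOfIdeal_map (f : L →ₗ⁅R⁆ L') (hf : Function.Surjective f)
    (I : LieIdeal R L) (n : ℕ) :
    derivedSeriesOfIdeal R L' n (LieIdeal.map f I) =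
      LieIdeal.map f (derivedSeriesOfIdeal R L n I) := by
  induction n with
  | zero => simp
  | succ n ih =>
    rw [derivedSeriesOfIdeal_succ, derivedSeriesOfIdeal_succ, ih,
      ← LieIdeal.map_bracket_eq _ hf]

/-- The image of a solvable ideal under a surjective hom is solvable. -/
theorem my_isSolvable_map (f : L →ₗ⁅R⁆ L') (hf : Function.Surjective f)
    (I : LieIdeal R L) (hI : IsSolvable I) : IsSolvable (LieIdeal.map f I) := by
  obtain ⟨n, hn⟩ := (isSolvable_iff R _).mp hI
  rw [LieIdeal.derivedSeries_eq_bot_iff] at hn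
  refine IsSolvable.mk (R := R) (k := n) ?_
  rw [LieIdeal.derivedSeries_eq_bot_iff, my_derivedSeriesOfIdeal_map f hf, hn,
    LieIdeal.map_eq_bot_iff]
  exact bot_le

end General2

section Prod

variable (R : Type) (L M : Type) [CommRing R] [LieRing L] [LieAlgebra R L]
  [LieRing M] [LieAlgebra R M]

/-- First projection as a Lie algebra hom. -/
def myFstHom : (L × M) →ₗ⁅R⁆ L :=
  { LinearMap.fst R L M with map_lie' := rfl }

/-- Second projection as a Lie algebra hom. -/
def mySndHom : (L × M) →ₗ⁅R⁆ M :=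
  { LinearMap.snd R L M with map_lie' := rfl }

@[simp] lemma myFstHom_apply (x : L × M) : myFstHom R L M x = x.1 := rfl
@[simp] lemma mySndHom_apply (x : L × M) : mySndHom R L M x = x.2 := rfl

lemma myFstHom_surjective : Function.Surjective (myFstHom R L M) :=
  fun x => ⟨(x, 0), rfl⟩

lemma mySndHom_surjective : Function.Surjective (mySndHom R L M) :=
  fun x => ⟨(0, x), rfl⟩

/-- A product of solvable Lie algebras is solvable. -/
theorem my_prod_isSolvable (R : Type) [CommRing R] [LieAlgebra R L] [LieAlgebra R M]
    [IsSolvable L] [IsSolvable M] : IsSolvable (L × M) := by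
  refine my_isSolvable_of_ker (mySndHom R L M) ?_ inferInstance
  let h : ((mySndHom R L M).ker : Type _) →ₗ⁅R⁆ L :=
    { toFun := fun x => x.val.1
      map_add' := by intro x y; rfl
      map_smul' := by intro c x; rfl
      map_lie' := by intro x y; rfl }
  have hinj : Function.Injective h := by
    intro x y hxy
    have hx2 : x.val.2 = 0 := LieHom.mem_ker.mp x.prop
    have hy2 : y.val.2 = 0 := LieHom.mem_ker.mp y.prop
    ext
    · exact hxy
    · rw [hx2, hy2]
  exact hinj.lieAlgebra_isSolvable

/-- The product of two Lie ideals, as an ideal of the product. -/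
def myProdIdeal (I : LieIdeal R L) (J : LieIdeal R M) : LieIdeal R (L × M) :=
  { I.toSubmodule.prod J.toSubmodule with
    lie_mem := by
      intro x m hm
      have hm' : m.1 ∈ I ∧ m.2 ∈ J := hm
      exact Set.mem_prod.mpr ⟨I.lie_mem hm'.1, J.lie_mem hm'.2⟩ }

@[simp] lemma mem_myProdIdeal {I : LieIdeal R L} {J : LieIdeal R M} {x : L × M} :
    x ∈ myProdIdeal R L M I J ↔ x.1 ∈ I ∧ x.2 ∈ J := Iff.rfl

theorem myProdIdeal_isSolvable (I : LieIdeal R L) (J : LieIdeal R M)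
    (hI : IsSolvable I) (hJ : IsSolvable J) :
    IsSolvable (myProdIdeal R L M I J) := by
  haveI := hI; haveI := hJ
  haveI : IsSolvable (I × J) := my_prod_isSolvable I J R
  let h : (myProdIdeal R L M I J : Type _) →ₗ⁅R⁆ (I × J) :=
    { toFun := fun x => (⟨x.val.1, x.prop.1⟩, ⟨x.val.2, x.prop.2⟩)
      map_add' := by intro x y; rfl
      map_smul' := by intro c x; rfl
      map_lie' := by intro x y; rfl }
  have hinj : Function.Injective h := by
    intro x y hxy
    have h1 : x.val.1 = y.val.1 := congrArg (fun z => (z.1 : L)) hxy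
    have h2 : x.val.2 = y.val.2 := congrArg (fun z => (z.2 : M)) hxy
    ext
    · exact h1
    · exact h2
  exact hinj.lieAlgebra_isSolvable

theorem my_radical_prod [IsNoetherian R L] [IsNoetherian R M] :
    radical R (L × M) = myProdIdeal R L M (radical R L) (radical R M) := by
  apply le_antisymm
  · intro x hx
    haveI : IsSolvable (radical R (L × M)) := inferInstance
    constructor
    · have h1 : IsSolvable (LieIdeal.map (myFstHom R L M) (radical R (L × M))) :=
        my_isSolvable_map _ (myFstHom_surjective R L M) _ inferInstance
      have h2 := (LieIdeal.solvable_iff_le_radical _ _ _).mp h1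
      exact h2 (LieIdeal.mem_map hx)
    · have h1 : IsSolvable (LieIdeal.map (mySndHom R L M) (radical R (L × M))) :=
        my_isSolvable_map _ (mySndHom_surjective R L M) _ inferInstance
      have h2 := (LieIdeal.solvable_iff_le_radical _ _ _).mp h1
      exact h2 (LieIdeal.mem_map hx)
  · exact (LieIdeal.solvable_iff_le_radical _ _ _).mp
      (myProdIdeal_isSolvable R L M _ _ inferInstance inferInstance)

end Prod

section Mat

variable (k : Type) [Field k] {m n : ℕ} (N : Matrix (Fin n) (Fin n) k)

lemma mem_lieO_iff {ι : Type} [Fintype ι] [DecidableEq ι] (M X : Matrix ι ι k) :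
    X ∈ lieO k M ↔ Xᵀ * M + M * X = 0 := Iff.rfl

lemma mem_lieO_fromBlocks (hN : IsUnit N)
    (X : Matrix (Fin m ⊕ Fin n) (Fin m ⊕ Fin n) k) :
    X ∈ lieO k (Matrix.fromBlocks 0 0 0 N) ↔
      X.toBlocks₂₁ = 0 ∧ X.toBlocks₂₂ ∈ lieO k N := by
  rw [mem_lieO_iff]
  set A := X.toBlocks₁₁
  set B := X.toBlocks₁₂
  set C := X.toBlocks₂₁
  set D := X.toBlocks₂₂
  have hX : X = Matrix.fromBlocks A B C D := (Matrix.fromBlocks_toBlocks X).symm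
  rw [hX, Matrix.fromBlocks_transpose, Matrix.fromBlocks_multiply, Matrix.fromBlocks_multiply,
    Matrix.fromBlocks_add, ← Matrix.fromBlocks_zero, Matrix.fromBlocks_inj]
  simp only [Matrix.mul_zero, Matrix.zero_mul, zero_add, add_zero]
  rw [mem_lieO_iff]
  constructor
  · rintro ⟨-, h12, h21, h22⟩
    have hC : C = 0 := by
      have h2 : (↑hN.unit⁻¹ : Matrix (Fin n) (Fin n) k) * (N * C) = 0 := by
        rw [h21, Matrix.mul_zero]
      rwa [← Matrix.mul_assoc, IsUnit.val_inv_mul, Matrix.one_mul] at h2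
    exact ⟨hC, h22⟩
  · rintro ⟨hC, hD⟩
    refine ⟨trivial, ?_, ?_, hD⟩
    · rw [hC]; simp
    · rw [hC]; simp

end Mat

section BlockHom

variable (k : Type) [Field k] {m n : ℕ} (N : Matrix (Fin n) (Fin n) k)

lemma my_mul_toBlocks₁₁ (P Q : Matrix (Fin m ⊕ Fin n) (Fin m ⊕ Fin n) k)
    (hQ : Q.toBlocks₂₁ = 0) : (P * Q).toBlocks₁₁ = P.toBlocks₁₁ * Q.toBlocks₁₁ := by
  conv_lhs => rw [← Matrix.fromBlocks_toBlocks P, ← Matrix.fromBlocks_toBlocks Q]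
  rw [Matrix.fromBlocks_multiply, Matrix.toBlocks_fromBlocks₁₁, hQ, Matrix.mul_zero, add_zero]

lemma my_mul_toBlocks₂₂ (P Q : Matrix (Fin m ⊕ Fin n) (Fin m ⊕ Fin n) k)
    (hP : P.toBlocks₂₁ = 0) : (P * Q).toBlocks₂₂ = P.toBlocks₂₂ * Q.toBlocks₂₂ := by
  conv_lhs => rw [← Matrix.fromBlocks_toBlocks P, ← Matrix.fromBlocks_toBlocks Q]
  rw [Matrix.fromBlocks_multiply, Matrix.toBlocks_fromBlocks₂₂, hP, Matrix.zero_mul, zero_add]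

lemma my_sub_toBlocks₁₁ (P Q : Matrix (Fin m ⊕ Fin n) (Fin m ⊕ Fin n) k) :
    (P - Q).toBlocks₁₁ = P.toBlocks₁₁ - Q.toBlocks₁₁ := rfl

lemma my_sub_toBlocks₂₂ (P Q : Matrix (Fin m ⊕ Fin n) (Fin m ⊕ Fin n) k) :
    (P - Q).toBlocks₂₂ = P.toBlocks₂₂ - Q.toBlocks₂₂ := rfl

/-- The projection from `o(0 ⊕ N)` onto `gl_m × o(N)`. -/
def myBlockHom (hN : IsUnit N) :
    (lieO k (Matrix.fromBlocks 0 0 0 N : Matrix (Fin m ⊕ Fin n) (Fin m ⊕ Fin n) k)) →ₗ⁅k⁆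
      (Matrix (Fin m) (Fin m) k × (lieO k N)) where
  toFun X := (X.val.toBlocks₁₁,
    ⟨X.val.toBlocks₂₂, ((mem_lieO_fromBlocks k N hN X.val).mp X.prop).2⟩)
  map_add' X Y := by
    refine Prod.ext ?_ (Subtype.ext ?_) <;> rfl
  map_smul' c X := by
    refine Prod.ext ?_ (Subtype.ext ?_) <;> rfl
  map_lie' {X Y} := by
    have hX : X.val.toBlocks₂₁ = 0 := ((mem_lieO_fromBlocks k N hN X.val).mp X.prop).1
    have hY : Y.val.toBlocks₂₁ = 0 := ((mem_lieO_fromBlocks k N hN Y.val).mp Y.prop).1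
    have hval := LieSubalgebra.coe_bracket (L := Matrix (Fin m ⊕ Fin n) (Fin m ⊕ Fin n) k)
      (lieO k (Matrix.fromBlocks 0 0 0 N)) X Y
    rw [Ring.lie_def] at hval
    refine Prod.ext ?_ (Subtype.ext ?_)
    · show ((⁅X, Y⁆ : ↥(lieO k (Matrix.fromBlocks 0 0 0 N))) :
        Matrix (Fin m ⊕ Fin n) (Fin m ⊕ Fin n) k).toBlocks₁₁ = _
      rw [hval, my_sub_toBlocks₁₁, my_mul_toBlocks₁₁ k _ _ hX, my_mul_toBlocks₁₁ k _ _ hY]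
      rfl
    · show ((⁅X, Y⁆ : ↥(lieO k (Matrix.fromBlocks 0 0 0 N))) :
        Matrix (Fin m ⊕ Fin n) (Fin m ⊕ Fin n) k).toBlocks₂₂ = _
      rw [hval, my_sub_toBlocks₂₂, my_mul_toBlocks₂₂ k _ _ hX, my_mul_toBlocks₂₂ k _ _ hY]
      rfl

lemma myBlockHom_surjective (hN : IsUnit N) :
    Function.Surjective (myBlockHom k N hN (m := m)) := by
  rintro ⟨A, D, hD⟩
  refine ⟨⟨Matrix.fromBlocks A 0 0 D, ?_⟩, ?_⟩
  · rw [mem_lieO_fromBlocks k N hN]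
    exact ⟨Matrix.toBlocks_fromBlocks₂₁ A 0 0 D, by rw [Matrix.toBlocks_fromBlocks₂₂]; exact hD⟩
  · refine Prod.ext ?_ (Subtype.ext ?_)
    · exact Matrix.toBlocks_fromBlocks₁₁ A 0 0 D
    · exact Matrix.toBlocks_fromBlocks₂₂ A 0 0 D

lemma myBlockHom_ker_abelian (hN : IsUnit N) :
    IsLieAbelian ((myBlockHom k N hN (m := m)).ker) := by
  constructor
  intro X Y
  have hX1 : X.val.val.toBlocks₁₁ = 0 :=
    congrArg Prod.fst (LieHom.mem_ker.mp X.prop)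
  have hX2 : X.val.val.toBlocks₂₂ = 0 := by
    have := congrArg Prod.snd (LieHom.mem_ker.mp X.prop)
    exact congrArg Subtype.val this
  have hX3 : X.val.val.toBlocks₂₁ = 0 :=
    ((mem_lieO_fromBlocks k N hN X.val.val).mp X.val.prop).1
  have hY1 : Y.val.val.toBlocks₁₁ = 0 :=
    congrArg Prod.fst (LieHom.mem_ker.mp Y.prop)
  have hY2 : Y.val.val.toBlocks₂₂ = 0 := by
    have := congrArg Prod.snd (LieHom.mem_ker.mp Y.prop)
    exact congrArg Subtype.val this
  have hY3 : Y.val.val.toBlocks₂₁ = 0 :=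
    ((mem_lieO_fromBlocks k N hN Y.val.val).mp Y.val.prop).1
  have key : ∀ P Q : Matrix (Fin m ⊕ Fin n) (Fin m ⊕ Fin n) k,
      P.toBlocks₁₁ = 0 → P.toBlocks₂₁ = 0 → P.toBlocks₂₂ = 0 →
      Q.toBlocks₁₁ = 0 → Q.toBlocks₂₁ = 0 → Q.toBlocks₂₂ = 0 → P * Q = 0 := by
    intro P Q h1 h2 h3 h4 h5 h6
    rw [← Matrix.fromBlocks_toBlocks P, ← Matrix.fromBlocks_toBlocks Q, h1, h2, h3, h4, h5, h6,
      Matrix.fromBlocks_multiply]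
    simp [Matrix.fromBlocks_zero]
  have hval := LieSubalgebra.coe_bracket (L := Matrix (Fin m ⊕ Fin n) (Fin m ⊕ Fin n) k)
    (lieO k (Matrix.fromBlocks 0 0 0 N)) X.val Y.val
  rw [Ring.lie_def, key _ _ hX1 hX3 hX2 hY1 hY3 hY2, key _ _ hY1 hY3 hY2 hX1 hX3 hX2,
    sub_zero] at hval
  have hz : ⁅X.val, Y.val⁆ = (0 : (lieO k (Matrix.fromBlocks 0 0 0 N) :
      LieSubalgebra k (Matrix (Fin m ⊕ Fin n) (Fin m ⊕ Fin n) k))) := Subtype.ext hval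
  ext
  exact congrFun (congrFun (congrArg Subtype.val hz) _) _

end BlockHom

/-- For `M = 0ₘ ⊕ N` with `N` invertible, the semisimple quotient
`o(M)/rad(o(M))` is isomorphic as a Lie algebra to
`(gl_m(k)/rad(gl_m(k))) × (o(N)/rad(o(N)))`. -/
theorem lieO_blockDiag_semisimple_quotient (k : Type) [Field k] (m n : ℕ)
    (hm : 0 < m) (hn : 0 < n) (N : Matrix (Fin n) (Fin n) k) (hN : IsUnit N) :
    Nonempty
      ((↥(lieO k (Matrix.fromBlocks 0 0 0 N : Matrix (Fin m ⊕ Fin n) (Fin m ⊕ Fin n) k)) ⧸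
          LieAlgebra.radical k
            ↥(lieO k (Matrix.fromBlocks 0 0 0 N : Matrix (Fin m ⊕ Fin n) (Fin m ⊕ Fin n) k)))
        ≃ₗ⁅k⁆
        ((Matrix (Fin m) (Fin m) k ⧸ LieAlgebra.radical k (Matrix (Fin m) (Fin m) k)) ×
          (↥(lieO k N) ⧸ LieAlgebra.radical k ↥(lieO k N)))) := by
  classical
  set M0 : Matrix (Fin m ⊕ Fin n) (Fin m ⊕ Fin n) k := Matrix.fromBlocks 0 0 0 N with hM0
  set G := Matrix (Fin m) (Fin m) k
  set O := (lieO k N : LieSubalgebra k (Matrix (Fin n) (Fin n) k))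
  -- the two homs
  let f₁ := myBlockHom k N hN (m := m)
  let f₂ : (G × O) →ₗ⁅k⁆ ((G ⧸ radical k G) × (O ⧸ radical k O)) :=
    { toLinearMap :=
        ((radical k G : LieIdeal k G) : Submodule k G).mkQ.prodMap
          ((radical k O : LieIdeal k O) : Submodule k O).mkQ
      map_lie' := by intro x y; rfl }
  let ψ := f₂.comp f₁
  have hf₁ : Function.Surjective f₁ := myBlockHom_surjective k N hN
  have hf₂ : Function.Surjective f₂ := by
    rintro ⟨x, y⟩
    obtain ⟨a, rfl⟩ := Submodule.mkQ_surjective _ x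
    obtain ⟨b, rfl⟩ := Submodule.mkQ_surjective _ y
    exact ⟨(a, b), rfl⟩
  have hψ : Function.Surjective ψ := hf₂.comp hf₁
  -- kernels
  haveI : IsLieAbelian f₁.ker := myBlockHom_ker_abelian k N hN
  haveI hk1 : IsSolvable f₁.ker := inferInstance
  have hkf2 : f₂.ker = myProdIdeal k G O (radical k G) (radical k O) := by
    ext x
    rw [LieHom.mem_ker, mem_myProdIdeal]
    constructor
    · intro h
      exact ⟨(Submodule.Quotient.mk_eq_zero _).mp (congrArg Prod.fst h),
        (Submodule.Quotient.mk_eq_zero _).mp (congrArg Prod.snd h)⟩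
    · rintro ⟨h1, h2⟩
      exact Prod.ext ((Submodule.Quotient.mk_eq_zero _).mpr h1)
        ((Submodule.Quotient.mk_eq_zero _).mpr h2)
  have hrad : radical k (G × O) = f₂.ker := by
    rw [hkf2]; exact my_radical_prod k G O
  have hcomap : ψ.ker = LieIdeal.comap f₁ (radical k (G × O)) := by
    ext x
    rw [LieHom.mem_ker, LieIdeal.mem_comap, hrad, LieHom.mem_ker]
    exact Iff.rfl
  -- ψ.ker = radical
  have hker : ψ.ker = radical k (lieO k M0) := by
    apply le_antisymm
    · rw [← LieIdeal.solvable_iff_le_radical, hcomap]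
      exact my_isSolvable_comap f₁ _ inferInstance hk1
    · intro x hx
      rw [hcomap, LieIdeal.mem_comap]
      have h1 : IsSolvable (LieIdeal.map f₁ (radical k (lieO k M0))) :=
        my_isSolvable_map f₁ hf₁ _ inferInstance
      exact (LieIdeal.solvable_iff_le_radical _ _ _).mp h1 (LieIdeal.mem_map hx)
  rw [← hker]
  have hrange : ψ.range = ⊤ := (LieHom.range_eq_top (f := ψ)).mpr hψ
  exact ⟨ψ.quotKerEquivRange.trans ((LieEquiv.ofEq _ _ (by rw [hrange])).trans LieSubalgebra.topEquiv)⟩
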